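/- Let α be a non-zero algebraic number of degree d with conjugates α_1, …, α_d and Mahler measure M(α). Let k and s be positive integers, let p_1 < … < p_s be the first s primes, set p_0 = 1 and n = d(k+s). Let β be the d(s+1)-tuple (α_1^{p_0}, …, α_d^{p_0}, α_1^{p_1}, …, α_d^{p_1}, …, α_1^{p_s}, …, α_d^{p_s}) and let r be the d(s+1)-tuple whose first d components equal k and whose remaining sd components equal 1. Then |V(β, r)|² ≤ (n^{k²+s} / ∏_{i=0}^{k−1} (2i+1)·(i!)²)^d · M(α)^{2n(k + p_1 + ⋯ + p_s)}. -/

import Mathlib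

lemma aux_pow_succ (n m : ℕ) : n ^ (m+1) + (m+1) * n ^ m ≤ (n+1) ^ (m+1) := by
  rw [add_pow n 1 (m+1)]
  have hsub : ({m, m+1} : Finset ℕ) ⊆ Finset.range (m+2) := by
    intro x hx
    simp only [Finset.mem_insert, Finset.mem_singleton] at hx
    rw [Finset.mem_range]; omega
  calc n ^ (m+1) + (m+1) * n ^ m
      = ∑ j ∈ ({m, m+1} : Finset ℕ), n ^ j * 1 ^ (m+1-j) * ((m+1).choose j) := by
        rw [Finset.sum_pair (by omega : m ≠ m+1)]
        simp [Nat.choose_succ_self_right]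
        ring
    _ ≤ _ := Finset.sum_le_sum_of_subset hsub

lemma aux_sum_pow (m : ℕ) : ∀ n : ℕ, (m+1) * ∑ r ∈ Finset.range n, r ^ m ≤ n ^ (m+1) := by
  intro n
  induction n with
  | zero => simp
  | succ n ih =>
    rw [Finset.sum_range_succ, Nat.mul_add]
    calc (m+1) * ∑ r ∈ Finset.range n, r ^ m + (m+1) * n ^ m
        ≤ n ^ (m+1) + (m+1) * n ^ m := Nat.add_le_add_right ih _
      _ ≤ (n+1) ^ (m+1) := aux_pow_succ n m

lemma aux_choose_sq (n i : ℕ) :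
    ((2*i+1) * (Nat.factorial i)^2) * ∑ r ∈ Finset.range n, (r.choose i)^2 ≤ n ^ (2*i+1) := by
  calc ((2*i+1) * (Nat.factorial i)^2) * ∑ r ∈ Finset.range n, (r.choose i)^2
      = (2*i+1) * ∑ r ∈ Finset.range n, (Nat.factorial i * r.choose i)^2 := by
        rw [Finset.mul_sum, Finset.mul_sum]
        refine Finset.sum_congr rfl fun r _ => by ring
    _ ≤ (2*i+1) * ∑ r ∈ Finset.range n, r ^ (2*i) := by
        refine Nat.mul_le_mul_left _ (Finset.sum_le_sum fun r _ => ?_)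
        rw [← Nat.descFactorial_eq_factorial_mul_choose, show 2*i = i*2 from mul_comm 2 i,
          pow_mul]
        exact Nat.pow_le_pow_left (Nat.descFactorial_le_pow r i) 2
    _ ≤ n ^ (2*i+1) := aux_sum_pow (2*i) n

open Finset Matrix in
lemma hadamard_ineq (n : ℕ) (A : Matrix (Fin n) (Fin n) ℂ) :
    ‖A.det‖ ^ 2 ≤ ∏ c, ∑ r, ‖A r c‖ ^ 2 := by
  set v : Fin n → EuclideanSpace ℂ (Fin n) := fun c => WithLp.toLp 2 (fun r => A r c) with hv
  set g : Fin n → EuclideanSpace ℂ (Fin n) := @InnerProductSpace.gramSchmidt ℂ _ _ _ _ (Fin n) _ _ (inferInstance : WellFoundedLT (Fin n)) v with hg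
  set G : Matrix (Fin n) (Fin n) ℂ := fun r c => g c r with hG
  set T : Matrix (Fin n) (Fin n) ℂ := fun i c =>
    if i < c then (inner ℂ (g i) (v c) : ℂ) / ((‖g i‖ : ℂ)) ^ 2 else if i = c then 1 else 0 with hT
  have hAGT : A = G * T := by
    ext r c
    have hvc0 := @InnerProductSpace.gramSchmidt_def'' ℂ _ _ _ _ (Fin n) _ _ (inferInstance : WellFoundedLT (Fin n)) v c
    rw [← hg] at hvc0
    have hvc := congrFun (congrArg WithLp.ofLp hvc0) r
    have h1 : (G * T) r c = ∑ i ∈ insert c (Finset.Iio c), g i r * T i c := by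
      rw [Matrix.mul_apply]
      refine (Finset.sum_subset (Finset.subset_univ _) ?_).symm
      intro i _ hi
      simp only [Finset.mem_insert, Finset.mem_Iio] at hi
      push_neg at hi
      simp [hT, hi.1, hi.2]
    rw [h1, Finset.sum_insert (by simp)]
    have h2 : T c c = 1 := by simp [hT]
    have h3 : ∀ i ∈ Finset.Iio c, g i r * T i c
        = ((((inner ℂ (g i) (v c) : ℂ) / ((‖g i‖ : ℂ)) ^ 2) • g i) r) := by
      intro i hi
      rw [Finset.mem_Iio] at hi
      simp only [hT, if_pos hi]
      rw [PiLp.smul_apply, smul_eq_mul, mul_comm]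
    rw [Finset.sum_congr rfl h3, h2, mul_one]
    calc A r c = v c r := rfl
      _ = (g c + ∑ i ∈ Finset.Iio c,
            ((inner ℂ (g i) (v c) : ℂ) / ((‖g i‖ : ℂ)) ^ 2) • g i) r := hvc
      _ = g c r + ∑ i ∈ Finset.Iio c,
            (((inner ℂ (g i) (v c) : ℂ) / ((‖g i‖ : ℂ)) ^ 2) • g i) r := by
          rw [PiLp.add_apply]
          congr 1
          rw [WithLp.ofLp_sum]
          exact Finset.sum_apply r _ _
  have hTtri : T.BlockTriangular id := by
    intro i c h
    have h1 : ¬ i < c := not_lt_of_gt h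
    have h2 : i ≠ c := ne_of_gt h
    simp [hT, h1, h2]
  have hdetT : T.det = 1 := by
    rw [Matrix.det_of_upperTriangular hTtri]
    exact Finset.prod_eq_one fun i _ => by simp [hT]
  have hdetA : A.det = G.det := by rw [hAGT, Matrix.det_mul, hdetT, mul_one]
  have hGram : Gᴴ * G = Matrix.diagonal (fun c => ((‖g c‖ : ℝ) : ℂ) ^ 2) := by
    ext c c'
    rw [Matrix.mul_apply]
    have hinner : ∑ r, (Gᴴ) c r * G r c' = (inner ℂ (g c) (g c') : ℂ) := by
      rw [PiLp.inner_apply]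
      refine Finset.sum_congr rfl fun r _ => ?_
      rw [Matrix.conjTranspose_apply]
      simp [RCLike.inner_apply, hG, mul_comm]
    rw [hinner]
    by_cases h : c = c'
    · subst h
      rw [inner_self_eq_norm_sq_to_K, Matrix.diagonal_apply_eq]
      rfl
    · rw [@InnerProductSpace.gramSchmidt_orthogonal ℂ _ _ _ _ (Fin n) _ _ (inferInstance : WellFoundedLT (Fin n)) v _ _ h, Matrix.diagonal_apply_ne _ h]
  have hdet2 : ‖G.det‖ ^ 2 = ∏ c, ‖g c‖ ^ 2 := by
    have h1 : (Gᴴ * G).det = ∏ c, ((‖g c‖ : ℝ) : ℂ) ^ 2 := by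
      rw [hGram, Matrix.det_diagonal]
    have h2 : (Gᴴ * G).det = ((‖G.det‖ ^ 2 : ℝ) : ℂ) := by
      rw [Matrix.det_mul, Matrix.det_conjTranspose, Complex.sq_norm]
      exact (Complex.normSq_eq_conj_mul_self).symm ▸ rfl
    have h3 : ((‖G.det‖ ^ 2 : ℝ) : ℂ) = ((∏ c, ‖g c‖ ^ 2 : ℝ) : ℂ) := by
      rw [← h2, h1]; push_cast; ring
    exact_mod_cast h3
  have hnormle : ∀ c, ‖g c‖ ^ 2 ≤ ‖v c‖ ^ 2 := by
    intro c
    have hvc := @InnerProductSpace.gramSchmidt_def' ℂ _ _ _ _ (Fin n) _ _ (inferInstance : WellFoundedLT (Fin n)) v c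
    rw [← hg] at hvc
    set w : EuclideanSpace ℂ (Fin n) := ∑ i ∈ Finset.Iio c, (ℂ ∙ g i).starProjection (v c) with hw
    have horth : (inner ℂ (g c) w : ℂ) = 0 := by
      rw [hw, inner_sum]
      refine Finset.sum_eq_zero fun i hi => ?_
      rw [Submodule.starProjection_singleton, inner_smul_right,
        @InnerProductSpace.gramSchmidt_orthogonal ℂ _ _ _ _ (Fin n) _ _ (inferInstance : WellFoundedLT (Fin n)) v _ _ (Finset.mem_Iio.mp hi).ne', mul_zero]
    have hns := norm_add_sq_eq_norm_sq_add_norm_sq_of_inner_eq_zero (g c) w horth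
    rw [hvc]
    simp only [pow_two]
    rw [hns]
    exact le_add_of_nonneg_right (mul_self_nonneg _)
  calc ‖A.det‖ ^ 2 = ∏ c, ‖g c‖ ^ 2 := by rw [hdetA, hdet2]
    _ ≤ ∏ c, ‖v c‖ ^ 2 :=
        Finset.prod_le_prod (fun c _ => sq_nonneg _) (fun c _ => hnormle c)
    _ = ∏ c, ∑ r, ‖A r c‖ ^ 2 := by
        refine Finset.prod_congr rfl fun c _ => ?_
        rw [EuclideanSpace.norm_eq, Real.sq_sqrt (Finset.sum_nonneg fun r _ => sq_nonneg _)]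


open Polynomial

/-- **Lemma 8 (Hadamard upper bound).** Let `α` be a non-zero algebraic number of
degree `d` with minimal polynomial `f(X) = a_d ∏ᵢ (X - αᵢ)` over `ℤ` (`a_d > 0`) and
Mahler measure `M(α) = a_d ∏ᵢ max(1, |αᵢ|)`.  Let `k, s` be positive integers,
`p₁ < ⋯ < p_s` the first `s` primes, `p₀ = 1` and `n = d(k+s)`.  Form the
`d(s+1)`-tuple `β = (α₁^{p₀}, …, α_d^{p₀}, α₁^{p₁}, …, α_d^{p₁}, …, α₁^{p_s}, …,
α_d^{p_s})` with multiplicities `r = (k, …, k, 1, …, 1)`, and let `M` be the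
corresponding `n × n` confluent Vandermonde matrix whose column indexed by the pair
`(c, i)` (with `i < r_c`) has `ℓ`-th entry `C(ℓ, i)·β_c^{ℓ-i}`.  Then
`|V(β,r)|² ≤ (n^{k²+s} / ∏_{i=0}^{k-1} (2i+1)(i!)²)^d · M(α)^{2n(k+p₁+⋯+p_s)}`. -/
theorem confluent_vandermonde_upper_bound
    (α : ℂ) (hα : α ≠ 0)
    (d : ℕ)
    (f : Polynomial ℤ) (hirr : Irreducible f)
    (hroot : Polynomial.aeval α f = 0)
    (hlead : 0 < f.leadingCoeff)
    (hdeg : f.natDegree = d)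
    (αs : Fin d → ℂ)
    (hfact : f.map (Int.castRingHom ℂ)
      = Polynomial.C (f.leadingCoeff : ℂ) * ∏ i, (Polynomial.X - Polynomial.C (αs i)))
    (k s : ℕ) (hk : 0 < k) (hs : 0 < s)
    (P : Fin (s + 1) → ℕ)
    (hP0 : P 0 = 1)
    (hP : ∀ ℓ : Fin (s + 1), (ℓ : ℕ) ≠ 0 → P ℓ = Nat.nth Nat.Prime ((ℓ : ℕ) - 1))
    (B : Fin (s + 1) × Fin d → ℂ) (hB : ∀ ℓ i, B (ℓ, i) = αs i ^ P ℓ)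
    (R : Fin (s + 1) × Fin d → ℕ) (hR : ∀ ℓ i, R (ℓ, i) = if ℓ = 0 then k else 1)
    (n : ℕ) (hn : n = d * (k + s))
    (e : Fin n ≃ (Σ c : Fin (s + 1) × Fin d, Fin (R c)))
    (M : Matrix (Fin n) (Fin n) ℂ)
    (hM : ∀ ℓ c : Fin n, M ℓ c =
      (Nat.choose (ℓ : ℕ) ((e c).2 : ℕ) : ℂ) * B (e c).1 ^ ((ℓ : ℕ) - ((e c).2 : ℕ))) :
    ‖M.det‖ ^ 2
      ≤ ((n : ℝ) ^ (k ^ 2 + s)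
            / ∏ i ∈ Finset.range k, ((2 * (i : ℝ) + 1) * (Nat.factorial i : ℝ) ^ 2)) ^ d
          * ((f.leadingCoeff : ℝ) * ∏ i, max 1 (‖αs i‖))
              ^ (2 * n * (k + ∑ i ∈ Finset.range s, Nat.nth Nat.Prime i)) := by
  classical
  set m : Fin d → ℝ := fun j => max 1 (‖αs j‖) with hm
  have hm1 : ∀ j, (1:ℝ) ≤ m j := fun j => le_max_left _ _
  have hm0 : ∀ j, (0:ℝ) ≤ m j := fun j => le_trans zero_le_one (hm1 j)
  set Q : ℕ := ∑ i ∈ Finset.range s, Nat.nth Nat.Prime i with hQ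
  set D : ℝ := ∏ i ∈ Finset.range k, ((2 * (i : ℝ) + 1) * (Nat.factorial i : ℝ) ^ 2) with hD
  have hDpos : 0 < D := Finset.prod_pos fun i _ => by positivity
  set Sb : ℕ → ℝ := fun i => (n:ℝ)^(2*i+1) / ((2*(i:ℝ)+1) * (Nat.factorial i : ℝ)^2) with hSb
  have hSb0 : ∀ i, 0 ≤ Sb i := fun i => by
    rw [hSb]; positivity
  -- sum of squares of binomial coefficients
  have hchoose : ∀ i : ℕ, ∑ r : Fin n, (((r:ℕ).choose i : ℝ))^2 ≤ Sb i := by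
    intro i
    rw [Fin.sum_univ_eq_sum_range (fun r => ((r.choose i : ℝ))^2) n, hSb,
      le_div_iff₀ (by positivity)]
    have hnat := aux_choose_sq n i
    calc (∑ r ∈ Finset.range n, ((r.choose i : ℝ))^2) * ((2*(i:ℝ)+1) * ((i.factorial : ℝ))^2)
        = ((((2*i+1) * (Nat.factorial i)^2) * ∑ r ∈ Finset.range n, (r.choose i)^2 : ℕ) : ℝ) := by
          push_cast; ring
      _ ≤ (((n:ℕ)^(2*i+1) : ℕ) : ℝ) := by exact_mod_cast hnat
      _ = (n:ℝ)^(2*i+1) := by push_cast; rfl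
  -- column bound
  have colb : ∀ c : Fin n, (∑ r, ‖M r c‖^2)
      ≤ Sb ((e c).2 : ℕ) * (m (e c).1.2 ^ P (e c).1.1) ^ (2*(n-1)) := by
    intro c
    set i : ℕ := ((e c).2 : ℕ) with hi
    set Mb : ℝ := m (e c).1.2 ^ P (e c).1.1 with hMb
    have hMb1 : (1:ℝ) ≤ Mb := one_le_pow₀ (hm1 _)
    have hMb0 : (0:ℝ) ≤ Mb := le_trans zero_le_one hMb1
    have habsB : ‖B (e c).1‖ ≤ Mb := by
      have hBe : B (e c).1 = αs (e c).1.2 ^ P (e c).1.1 := hB _ _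
      rw [hBe, norm_pow, hMb]
      exact pow_le_pow_left₀ (norm_nonneg _) (le_max_right _ _) _
    have hterm : ∀ r : Fin n, ‖M r c‖^2
        ≤ (((r:ℕ).choose i : ℝ))^2 * Mb^(2*(n-1)) := by
      intro r
      have h1 : ‖B (e c).1‖ ^ ((r:ℕ) - i) ≤ Mb ^ (n-1) :=
        calc ‖B (e c).1‖ ^ ((r:ℕ) - i) ≤ Mb ^ ((r:ℕ) - i) :=
              pow_le_pow_left₀ (norm_nonneg _) habsB _
          _ ≤ Mb ^ (n-1) := pow_le_pow_right₀ hMb1 (by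
              have := r.isLt; omega)
      calc ‖M r c‖^2
          = (((r:ℕ).choose i : ℝ) * ‖B (e c).1‖ ^ ((r:ℕ) - i))^2 := by
            rw [hM r c, norm_mul, norm_pow, Complex.norm_natCast]
        _ ≤ (((r:ℕ).choose i : ℝ) * Mb ^ (n-1))^2 := by
            refine pow_le_pow_left₀ (by positivity) ?_ 2
            exact mul_le_mul_of_nonneg_left h1 (Nat.cast_nonneg _)
        _ = (((r:ℕ).choose i : ℝ))^2 * Mb^(2*(n-1)) := by
            rw [mul_pow, ← pow_mul, Nat.mul_comm (n-1) 2]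
    calc (∑ r, ‖M r c‖^2)
        ≤ ∑ r : Fin n, (((r:ℕ).choose i : ℝ))^2 * Mb^(2*(n-1)) :=
          Finset.sum_le_sum fun r _ => hterm r
      _ = (∑ r : Fin n, (((r:ℕ).choose i : ℝ))^2) * Mb^(2*(n-1)) :=
          (Finset.sum_mul _ _ _).symm
      _ ≤ Sb i * Mb^(2*(n-1)) :=
          mul_le_mul_of_nonneg_right (hchoose i) (by positivity)
  -- Hadamard inequality
  have had := hadamard_ineq n M
  set bigF : (Σ c : Fin (s+1) × Fin d, Fin (R c)) → ℝ :=
    fun x => Sb (x.2:ℕ) * (m x.1.2 ^ P x.1.1)^(2*(n-1)) with hbigF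
  have h2 : (∏ c : Fin n, ∑ r, ‖M r c‖^2) ≤ ∏ c : Fin n, bigF (e c) :=
    Finset.prod_le_prod (fun c _ => Finset.sum_nonneg fun r _ => sq_nonneg _)
      (fun c _ => colb c)
  have h3 : (∏ c : Fin n, bigF (e c)) = ∏ x, bigF x := Equiv.prod_comp e bigF
  have h4 : (∏ x : (Σ c : Fin (s+1) × Fin d, Fin (R c)), bigF x)
      = ∏ p : Fin (s+1) × Fin d, ∏ i2 : Fin (R p), bigF ⟨p, i2⟩ := by
    rw [← Finset.univ_sigma_univ, Finset.prod_sigma]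
  have hodd : ∀ K : ℕ, ∑ i ∈ Finset.range K, (2*i+1) = K^2 := by
    intro K
    induction K with
    | zero => simp
    | succ K ih => rw [Finset.sum_range_succ, ih]; ring
  have h6 : (∏ i2 ∈ Finset.range k, Sb i2) = (n:ℝ)^(k^2) / D := by
    rw [hSb, hD, Finset.prod_div_distrib, Finset.prod_pow_eq_pow_sum, hodd]
  have h5 : ∀ p : Fin (s+1) × Fin d, (∏ i2 : Fin (R p), bigF ⟨p, i2⟩)
      = (∏ i2 ∈ Finset.range (R p), Sb i2) * ((m p.2 ^ P p.1)^(2*(n-1)))^(R p) := by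
    intro p
    have hbF : ∀ i2 : Fin (R p), bigF ⟨p, i2⟩ = Sb (i2:ℕ) * (m p.2 ^ P p.1)^(2*(n-1)) :=
      fun _ => rfl
    rw [Finset.prod_congr rfl fun i2 _ => hbF i2, Finset.prod_mul_distrib, Finset.prod_const, Finset.card_univ, Fintype.card_fin,
      Fin.prod_univ_eq_prod_range]
  have hterm2 : ∀ (j : Fin d) (t : Fin s),
      ((∏ i2 ∈ Finset.range (R (Fin.succ t, j)), Sb i2)
          * ((m j ^ P (Fin.succ t))^(2*(n-1)))^(R (Fin.succ t, j)))
        = (n:ℝ) * (m j)^(2*(n-1) * Nat.nth Nat.Prime (t:ℕ)) := by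
    intro j t
    rw [hR, if_neg (Fin.succ_ne_zero t), pow_one, Finset.prod_range_one]
    have hSbz : Sb 0 = (n:ℝ) := by rw [hSb]; norm_num
    have hPt : P (Fin.succ t) = Nat.nth Nat.Prime (t:ℕ) := by
      rw [hP (Fin.succ t) (by simp [Fin.val_succ])]
      simp [Fin.val_succ]
    rw [hSbz, hPt, ← pow_mul, mul_comm (Nat.nth Nat.Prime (t:ℕ)) (2*(n-1))]
  have h7 : (∏ p : Fin (s+1) × Fin d,
        (∏ i2 ∈ Finset.range (R p), Sb i2) * ((m p.2 ^ P p.1)^(2*(n-1)))^(R p))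
      = ∏ j : Fin d, (((n:ℝ)^(k^2)/D) * (n:ℝ)^s) * (m j)^(2*(n-1)*(k+Q)) := by
    rw [Fintype.prod_prod_type, Finset.prod_comm]
    refine Finset.prod_congr rfl fun j _ => ?_
    rw [Fin.prod_univ_succ]
    have h0term : ((∏ i2 ∈ Finset.range (R (0, j)), Sb i2)
          * ((m j ^ P 0)^(2*(n-1)))^(R (0, j)))
        = ((n:ℝ)^(k^2)/D) * (m j)^(2*(n-1)*k) := by
      rw [hR, if_pos rfl, hP0, pow_one, h6, ← pow_mul]
    rw [h0term, Finset.prod_congr rfl (fun t _ => hterm2 j t),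
      Finset.prod_mul_distrib, Finset.prod_const, Finset.card_univ, Fintype.card_fin]
    have hsum2 : (∏ t : Fin s, (m j)^(2*(n-1) * Nat.nth Nat.Prime (t:ℕ)))
        = (m j)^(2*(n-1)*Q) := by
      rw [Finset.prod_pow_eq_pow_sum]
      congr 1
      rw [← Finset.mul_sum, hQ]
      congr 1
      exact Fin.sum_univ_eq_sum_range (fun t => Nat.nth Nat.Prime t) s
    rw [hsum2, Nat.mul_add (2*(n-1)) k Q, pow_add]
    ring
  have h8 : (∏ j : Fin d, (((n:ℝ)^(k^2)/D) * (n:ℝ)^s) * (m j)^(2*(n-1)*(k+Q)))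
      = (((n:ℝ)^(k^2)/D) * (n:ℝ)^s)^d * (∏ j, m j)^(2*(n-1)*(k+Q)) := by
    rw [Finset.prod_mul_distrib, Finset.prod_const, Finset.card_univ, Fintype.card_fin,
      Finset.prod_pow]
  -- final comparison
  have hPm1 : (1:ℝ) ≤ ∏ j, m j := by
    have := Finset.prod_le_prod (s := (Finset.univ : Finset (Fin d))) (f := fun _ : Fin d => (1:ℝ)) (g := m)
      (fun j _ => zero_le_one) (fun j _ => hm1 j)
    simpa using this
  have ha1 : (1:ℝ) ≤ (f.leadingCoeff : ℝ) := by
    have : (1:ℤ) ≤ f.leadingCoeff := hlead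
    exact_mod_cast this
  have hbase1 : (1:ℝ) ≤ (f.leadingCoeff : ℝ) * ∏ j, m j :=
    one_le_mul_of_one_le_of_one_le ha1 hPm1
  have hfin : (∏ j, m j)^(2*(n-1)*(k+Q))
      ≤ ((f.leadingCoeff : ℝ) * ∏ j, m j)^(2*n*(k+Q)) := by
    calc (∏ j, m j)^(2*(n-1)*(k+Q))
        ≤ ((f.leadingCoeff : ℝ) * ∏ j, m j)^(2*(n-1)*(k+Q)) := by
          refine pow_le_pow_left₀ (le_trans zero_le_one hPm1) ?_ _
          exact le_mul_of_one_le_left (le_trans zero_le_one hPm1) ha1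
      _ ≤ ((f.leadingCoeff : ℝ) * ∏ j, m j)^(2*n*(k+Q)) := by
          refine pow_le_pow_right₀ hbase1 ?_
          have : n - 1 ≤ n := Nat.sub_le n 1
          exact Nat.mul_le_mul_right _ (Nat.mul_le_mul_left 2 this)
  have hfirst : (((n:ℝ)^(k^2)/D) * (n:ℝ)^s)^d = ((n:ℝ)^(k^2+s)/D)^d := by
    rw [pow_add]
    congr 1
    rw [div_mul_eq_mul_div]
  calc ‖M.det‖ ^ 2
      ≤ ∏ c : Fin n, ∑ r, ‖M r c‖^2 := had
    _ ≤ ∏ c : Fin n, bigF (e c) := h2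
    _ = (((n:ℝ)^(k^2)/D) * (n:ℝ)^s)^d * (∏ j, m j)^(2*(n-1)*(k+Q)) := by
        rw [h3, h4, Finset.prod_congr rfl (fun p _ => h5 p), h7, h8]
    _ ≤ (((n:ℝ)^(k^2)/D) * (n:ℝ)^s)^d
          * ((f.leadingCoeff : ℝ) * ∏ j, m j)^(2*n*(k+Q)) := by
        refine mul_le_mul_of_nonneg_left hfin ?_
        have : (0:ℝ) ≤ ((n:ℝ)^(k^2)/D) * (n:ℝ)^s := by
          refine mul_nonneg (div_nonneg (by positivity) hDpos.le) (by positivity)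
        exact pow_nonneg this d
    _ = ((n:ℝ)^(k^2+s)/D)^d * ((f.leadingCoeff : ℝ) * ∏ j, m j)^(2*n*(k+Q)) := by
        rw [hfirst]
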